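/- arXiv:2412.09135 — 2 statements merged into one kernel-verified Lean document; each statement's English description precedes it below -/
import Mathlib

section
/- Define on the closure of the two-dimensional neck region Ω_{2R} the Keller-type function k(x) = (x₂ − (h₁(x₁) − h₂(x₁))/2)/δ(x₁), the functions F(x₁) = −3(h₁ − h₂)(x₁)/δ(x₁) and G(x) = (h₁' − h₂')(x₁) k(x) + (h₁' + h₂')(x₁)/2 + 3(h₁ − h₂)(x₁) ∂_{x₁}k(x), and the vector field v₁¹(x) = (k(x) + 1/2, 0)ᵀ + (F(x₁), G(x))ᵀ (k(x)² − 1/4). Then v₁¹ is divergence free in Ω_{2R} (∇·v₁¹ = 0), and it attains the boundary values v₁¹ = (1, 0)ᵀ on Γ_{2R}^+ and v₁¹ = 0 on Γ_{2R}^−. -/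
open Set

noncomputable section

/-- Points of the plane. -/
abbrev Pt : Type := ℝ × ℝ

/-- Partial derivative in the first variable. -/
def pd1 (f : Pt → ℝ) (x : Pt) : ℝ := deriv (fun t => f (t, x.2)) x.1

/-- Partial derivative in the second variable. -/
def pd2 (f : Pt → ℝ) (x : Pt) : ℝ := deriv (fun t => f (x.1, t)) x.2

/-- the auxiliary vector field
`v₁¹ = (k + 1/2, 0)ᵀ + (F, G)ᵀ (k² − 1/4)` is divergence free in the neck region Ω_{2R}
and attains the boundary values (1,0) on Γ_{2R}⁺ and 0 on Γ_{2R}⁻. -/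
theorem v11_divfree_and_boundary (m : ℕ) (ε κ R : ℝ)
    (hε : 0 < ε) (hε' : ε < 1 / 2) (hκ : 0 < κ) (hR : 0 < R)
    (h1 h2 : ℝ → ℝ)
    (hh1 : ContDiffOn ℝ (m + 1) h1 (Icc (-(2 * R)) (2 * R)))
    (hh2 : ContDiffOn ℝ (m + 1) h2 (Icc (-(2 * R)) (2 * R)))
    (h10 : h1 0 = 0) (h20 : h2 0 = 0)
    (h1d0 : deriv h1 0 = 0) (h2d0 : deriv h2 0 = 0)
    (hord : ∀ x₁ : ℝ, |x₁| ≤ 2 * R → -(ε / 2) - h2 x₁ < ε / 2 + h1 x₁)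
    (hgap : ∀ x₁ : ℝ, |x₁| ≤ 2 * R → κ * x₁ ^ 2 ≤ h1 x₁ + h2 x₁)
    -- the vertical width δ
    (δ : ℝ → ℝ) (hδ : δ = fun x₁ => ε + h1 x₁ + h2 x₁)
    -- the Keller-type function k
    (k : Pt → ℝ) (hk : k = fun x => (x.2 - (h1 x.1 - h2 x.1) / 2) / δ x.1)
    -- the correctors F and G
    (F : ℝ → ℝ) (hF : F = fun x₁ => -3 * (h1 x₁ - h2 x₁) / δ x₁)
    (G : Pt → ℝ) (hG : G = fun x => (deriv h1 x.1 - deriv h2 x.1) * k x +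
      (deriv h1 x.1 + deriv h2 x.1) / 2 + 3 * (h1 x.1 - h2 x.1) * pd1 k x)
    -- the auxiliary vector field v₁¹
    (v : Pt → Pt) (hv : v = fun x =>
      ((k x + 1 / 2 + F x.1 * (k x ^ 2 - 1 / 4), G x * (k x ^ 2 - 1 / 4)) : Pt))
    -- the neck region Ω_{2R}
    (Ω2R : Set Pt) (hΩ : Ω2R =
      {x : Pt | -(ε / 2) - h2 x.1 < x.2 ∧ x.2 < ε / 2 + h1 x.1 ∧ |x.1| < 2 * R}) :
    (∀ x ∈ Ω2R, pd1 (fun y => (v y).1) x + pd2 (fun y => (v y).2) x = 0) ∧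
    (∀ x₁ : ℝ, |x₁| < 2 * R → v (x₁, ε / 2 + h1 x₁) = ((1 : ℝ), (0 : ℝ))) ∧
    (∀ x₁ : ℝ, |x₁| < 2 * R → v (x₁, -(ε / 2) - h2 x₁) = (0 : Pt)) := by
  subst hδ hk hF hG hv hΩ
  have hdpos : ∀ t : ℝ, |t| ≤ 2 * R → 0 < ε + h1 t + h2 t := by
    intro t ht
    have := hgap t ht
    nlinarith [sq_nonneg t]
  refine ⟨?_, ?_, ?_⟩
  · rintro ⟨x₁, x₂⟩ ⟨hx1, hx2, hx3⟩
    have hd : ε + h1 x₁ + h2 x₁ ≠ 0 := ne_of_gt (hdpos x₁ hx3.le)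
    have habs := abs_lt.1 hx3
    have hnhds : Icc (-(2 * R)) (2 * R) ∈ nhds x₁ := Icc_mem_nhds habs.1 habs.2
    have h1le : (1 : WithTop ℕ∞) ≤ (m : WithTop ℕ∞) + 1 := le_add_self
    have hD1 : HasDerivAt h1 (deriv h1 x₁) x₁ :=
      (((hh1.differentiableOn (lt_of_lt_of_le zero_lt_one h1le).ne').differentiableAt hnhds)).hasDerivAt
    have hD2 : HasDerivAt h2 (deriv h2 x₁) x₁ :=
      (((hh2.differentiableOn (lt_of_lt_of_le zero_lt_one h1le).ne').differentiableAt hnhds)).hasDerivAt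
    have hDen : HasDerivAt (fun t => ε + h1 t + h2 t) (deriv h1 x₁ + deriv h2 x₁) x₁ := by
      simpa [Pi.add_def] using ((hasDerivAt_const x₁ ε).add hD1).add hD2
    have hNum : ∀ s : ℝ, HasDerivAt (fun t => s - (h1 t - h2 t) / 2) (-((deriv h1 x₁ - deriv h2 x₁) / 2)) x₁ := by
      intro s
      simpa using ((hD1.sub hD2).div_const 2).const_sub s
    have hK : ∀ s : ℝ, HasDerivAt (fun t => (s - (h1 t - h2 t) / 2) / (ε + h1 t + h2 t))
        ((-((deriv h1 x₁ - deriv h2 x₁) / 2) * (ε + h1 x₁ + h2 x₁) - (s - (h1 x₁ - h2 x₁) / 2) * (deriv h1 x₁ + deriv h2 x₁)) /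
          (ε + h1 x₁ + h2 x₁) ^ 2) x₁ :=
      fun s => (hNum s).div hDen hd
    have hpd1k : ∀ s : ℝ,
        pd1 (fun x : Pt => (x.2 - (h1 x.1 - h2 x.1) / 2) / (ε + h1 x.1 + h2 x.1)) (x₁, s)
        = (-((deriv h1 x₁ - deriv h2 x₁) / 2) * (ε + h1 x₁ + h2 x₁) - (s - (h1 x₁ - h2 x₁) / 2) * (deriv h1 x₁ + deriv h2 x₁)) /
          (ε + h1 x₁ + h2 x₁) ^ 2 := fun s => (hK s).deriv
    simp only [pd1, pd2] at hpd1k ⊢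
    simp only [hpd1k]
    have hKx := hK x₂
    have hFd := ((hD1.sub hD2).const_mul (-3 : ℝ)).div hDen hd
    have hV1 := (hKx.add_const ((1:ℝ)/2)).add (hFd.mul ((hKx.pow 2).sub_const ((1:ℝ)/4)))
    have hks : HasDerivAt (fun t : ℝ => (t - (h1 x₁ - h2 x₁) / 2) / (ε + h1 x₁ + h2 x₁))
        (1 / (ε + h1 x₁ + h2 x₁)) x₂ := by
      simpa using ((hasDerivAt_id x₂).sub_const ((h1 x₁ - h2 x₁) / 2)).div_const (ε + h1 x₁ + h2 x₁)
    have hL : HasDerivAt (fun t : ℝ =>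
        (-((deriv h1 x₁ - deriv h2 x₁) / 2) * (ε + h1 x₁ + h2 x₁) -
          (t - (h1 x₁ - h2 x₁) / 2) * (deriv h1 x₁ + deriv h2 x₁)) / (ε + h1 x₁ + h2 x₁) ^ 2)
        (-(deriv h1 x₁ + deriv h2 x₁) / (ε + h1 x₁ + h2 x₁) ^ 2) x₂ := by
      simpa using ((((hasDerivAt_id x₂).sub_const ((h1 x₁ - h2 x₁) / 2)).mul_const
        (deriv h1 x₁ + deriv h2 x₁)).const_sub
        (-((deriv h1 x₁ - deriv h2 x₁) / 2) * (ε + h1 x₁ + h2 x₁))).div_const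
        ((ε + h1 x₁ + h2 x₁) ^ 2)
    have hV2 := (((hks.const_mul (deriv h1 x₁ - deriv h2 x₁)).add_const
        ((deriv h1 x₁ + deriv h2 x₁) / 2)).add (hL.const_mul (3 * (h1 x₁ - h2 x₁)))).mul
        ((hks.pow 2).sub_const ((1:ℝ)/4))
    erw [hV1.deriv, hV2.deriv]
    simp only [Pi.add_apply, Pi.mul_apply, Pi.div_apply, Pi.pow_apply, Pi.sub_apply]
    revert hd
    generalize ε + h1 x₁ + h2 x₁ = d
    generalize h1 x₁ - h2 x₁ = q
    intro hd
    field_simp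
    ring_nf
    field_simp
    ring

  · intro x₁ hx
    have hd : ε + h1 x₁ + h2 x₁ ≠ 0 := ne_of_gt (hdpos x₁ hx.le)
    have hk12 : (ε / 2 + h1 x₁ - (h1 x₁ - h2 x₁) / 2) / (ε + h1 x₁ + h2 x₁) = 1 / 2 := by
      rw [div_eq_iff hd]; ring
    simp only [hk12]
    norm_num
  · intro x₁ hx
    have hd : ε + h1 x₁ + h2 x₁ ≠ 0 := ne_of_gt (hdpos x₁ hx.le)
    have hk12 : (-(ε / 2) - h2 x₁ - (h1 x₁ - h2 x₁) / 2) / (ε + h1 x₁ + h2 x₁) = -(1 / 2) := by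
      rw [div_eq_iff hd]; ring
    simp only [hk12]
    norm_num [Prod.ext_iff]
end
end

section
/- Define on the two-dimensional neck region Ω_{2R} the Keller-type function k(x) = (x₂ − (h₁(x₁) − h₂(x₁))/2)/δ(x₁), the functions F(x) = 1 − ((h₁ + h₂)(x₁) + 3x₁²)/δ(x₁) − 3(h₁ − h₂)(x₁) x₂/(2δ(x₁)) − 5 k(x) x₂ and G(x) = 3δ(x₁) k(x) ∂_{x₁}k(x) x₂ + (3(h₁ − h₂)(x₁)/2) ∂_{x₁}k(x) x₂ + 2x₁ k(x) − (ε − 3x₁²) ∂_{x₁}k(x), and the vector field v₃¹(x) = ψ₃(x)(k(x) + 1/2) + (F(x), G(x))ᵀ (k(x)² − 1/4), where ψ₃(x) = (x₂, −x₁)ᵀ. Then v₃¹ is divergence free in Ω_{2R} (∇·v₃¹ = 0), and it attains the boundary values v₃¹ = ψ₃ on Γ_{2R}^+ and v₃¹ = 0 on Γ_{2R}^−. -/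
open Set

noncomputable section

set_option maxHeartbeats 1000000 in
/-- the auxiliary vector field
`v₃¹ = ψ₃ (k + 1/2) + (F, G)ᵀ (k² − 1/4)`, with ψ₃ = (x₂, −x₁)ᵀ and the explicit
correctors F, G, is divergence free in Ω_{2R} and attains the boundary values ψ₃ on
Γ_{2R}⁺ and 0 on Γ_{2R}⁻. -/
theorem v31_divfree_and_boundary (m : ℕ) (ε κ R : ℝ)
    (hε : 0 < ε) (hε' : ε < 1 / 2) (hκ : 0 < κ) (hR : 0 < R)
    (h1 h2 : ℝ → ℝ)
    (hh1 : ContDiffOn ℝ (m + 1) h1 (Icc (-(2 * R)) (2 * R)))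
    (hh2 : ContDiffOn ℝ (m + 1) h2 (Icc (-(2 * R)) (2 * R)))
    (h10 : h1 0 = 0) (h20 : h2 0 = 0)
    (h1d0 : deriv h1 0 = 0) (h2d0 : deriv h2 0 = 0)
    (hord : ∀ x₁ : ℝ, |x₁| ≤ 2 * R → -(ε / 2) - h2 x₁ < ε / 2 + h1 x₁)
    (hgap : ∀ x₁ : ℝ, |x₁| ≤ 2 * R → κ * x₁ ^ 2 ≤ h1 x₁ + h2 x₁)
    -- the vertical width δ and the Keller-type function k
    (δ : ℝ → ℝ) (hδ : δ = fun x₁ => ε + h1 x₁ + h2 x₁)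
    (k : Pt → ℝ) (hk : k = fun x => (x.2 - (h1 x.1 - h2 x.1) / 2) / δ x.1)
    -- the rigid motion ψ₃
    (ψ₃ : Pt → Pt) (hψ₃ : ψ₃ = fun x => ((x.2, -x.1) : Pt))
    -- the correctors F and G
    (F : Pt → ℝ) (hF : F = fun x =>
      1 - ((h1 x.1 + h2 x.1) + 3 * x.1 ^ 2) / δ x.1 -
        3 * (h1 x.1 - h2 x.1) * x.2 / (2 * δ x.1) - 5 * k x * x.2)
    (G : Pt → ℝ) (hG : G = fun x =>
      3 * δ x.1 * k x * pd1 k x * x.2 + 3 * (h1 x.1 - h2 x.1) / 2 * pd1 k x * x.2 +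
        2 * x.1 * k x - (ε - 3 * x.1 ^ 2) * pd1 k x)
    -- the auxiliary vector field v₃¹
    (v : Pt → Pt) (hv : v = fun x =>
      (((ψ₃ x).1 * (k x + 1 / 2) + F x * (k x ^ 2 - 1 / 4),
        (ψ₃ x).2 * (k x + 1 / 2) + G x * (k x ^ 2 - 1 / 4)) : Pt))
    -- the neck region Ω_{2R}
    (Ω2R : Set Pt) (hΩ : Ω2R =
      {x : Pt | -(ε / 2) - h2 x.1 < x.2 ∧ x.2 < ε / 2 + h1 x.1 ∧ |x.1| < 2 * R}) :
    (∀ x ∈ Ω2R, pd1 (fun y => (v y).1) x + pd2 (fun y => (v y).2) x = 0) ∧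
    (∀ x₁ : ℝ, |x₁| < 2 * R → v (x₁, ε / 2 + h1 x₁) = ψ₃ (x₁, ε / 2 + h1 x₁)) ∧
    (∀ x₁ : ℝ, |x₁| < 2 * R → v (x₁, -(ε / 2) - h2 x₁) = (0 : Pt)) := by
  subst hδ hk hψ₃ hF hG hv hΩ
  have hdiff : ∀ x₁ : ℝ, |x₁| < 2 * R →
      HasDerivAt h1 (deriv h1 x₁) x₁ ∧ HasDerivAt h2 (deriv h2 x₁) x₁ := by
    intro x₁ hx
    obtain ⟨hl, hr⟩ := abs_lt.mp hx
    have hmem : Icc (-(2*R)) (2*R) ∈ nhds x₁ := Icc_mem_nhds hl hr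
    have hle : (1 : WithTop ℕ∞) ≤ (m : WithTop ℕ∞) + 1 := le_add_self
    exact ⟨((hh1.differentiableOn (lt_of_lt_of_le zero_lt_one hle).ne').differentiableAt hmem).hasDerivAt,
           ((hh2.differentiableOn (lt_of_lt_of_le zero_lt_one hle).ne').differentiableAt hmem).hasDerivAt⟩
  refine ⟨?_, ?_, ?_⟩
  · rintro ⟨p, q⟩ hx
    simp only [Set.mem_setOf_eq] at hx
    obtain ⟨hx1, hx2, hx3⟩ := hx
    have hD : (0:ℝ) < ε + h1 p + h2 p := by have := hord p hx3.le; linarith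
    have hDne : ε + h1 p + h2 p ≠ 0 := hD.ne'
    have h2Dne : 2 * (ε + h1 p + h2 p) ≠ 0 := by positivity
    have hDD : (ε + h1 p + h2 p) * (ε + h1 p + h2 p)⁻¹ = 1 := mul_inv_cancel₀ hDne
    obtain ⟨hA, hB⟩ := hdiff p hx3
    have hDen : HasDerivAt (fun s => ε + h1 s + h2 s) (deriv h1 p + deriv h2 p) p := by
      exact (((hasDerivAt_const p ε).add hA).add hB).congr_deriv (by ring)
    have hK : ∀ t : ℝ, HasDerivAt (fun s => (t - (h1 s - h2 s) / 2) / (ε + h1 s + h2 s))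
        ((-((deriv h1 p - deriv h2 p) / 2) * (ε + h1 p + h2 p) - (t - (h1 p - h2 p) / 2) * (deriv h1 p + deriv h2 p)) / (ε + h1 p + h2 p) / (ε + h1 p + h2 p)) p := by
      intro t
      have hnum : HasDerivAt (fun s => t - (h1 s - h2 s) / 2) (-((deriv h1 p - deriv h2 p) / 2)) p := by
        exact ((hasDerivAt_const p t).sub ((hA.sub hB).div_const 2)).congr_deriv (by ring)
      have := hnum.div hDen hDne
      refine this.congr_deriv (Eq.symm ?_)
      rw [div_div, ← pow_two]
    have hKd : ∀ t : ℝ, deriv (fun s => (t - (h1 s - h2 s) / 2) / (ε + h1 s + h2 s)) p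
        = (-((deriv h1 p - deriv h2 p) / 2) * (ε + h1 p + h2 p) - (t - (h1 p - h2 p) / 2) * (deriv h1 p + deriv h2 p)) / (ε + h1 p + h2 p) / (ε + h1 p + h2 p) := fun t => (hK t).deriv
    simp only [pd1, pd2, hKd]
    have hFder : HasDerivAt (fun s => 1 - (h1 s + h2 s + 3 * s ^ 2) / (ε + h1 s + h2 s) -
        3 * (h1 s - h2 s) * q / (2 * (ε + h1 s + h2 s)) -
        5 * ((q - (h1 s - h2 s) / 2) / (ε + h1 s + h2 s)) * q) (-(6 * p) / (ε + h1 p + h2 p) - (ε - 3 * p ^ 2 - 3 * q ^ 2) * (deriv h1 p + deriv h2 p) / (ε + h1 p + h2 p) / (ε + h1 p + h2 p) - 2 * q * ((-((deriv h1 p - deriv h2 p) / 2) * (ε + h1 p + h2 p) - (q - (h1 p - h2 p) / 2) * (deriv h1 p + deriv h2 p)) / (ε + h1 p + h2 p) / (ε + h1 p + h2 p))) p := by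
      have := (((hasDerivAt_const p (1:ℝ)).sub
          (((hA.add hB).add ((hasDerivAt_pow 2 p).const_mul 3)).div hDen hDne)).sub
          ((((hA.sub hB).const_mul 3).mul_const q).div (hDen.const_mul 2) h2Dne)).sub
          ((((hK q)).const_mul 5).mul_const q)
      refine this.congr_deriv (Eq.symm ?_)
      simp only [Pi.add_apply, Pi.sub_apply, Pi.mul_apply, Pi.div_apply, Pi.pow_apply]
      field_simp
      ring
    have hFp : (1 - (h1 p + h2 p + 3 * p ^ 2) / (ε + h1 p + h2 p) - 3 * (h1 p - h2 p) * q / (2 * (ε + h1 p + h2 p)) - 5 * ((q - (h1 p - h2 p) / 2) / (ε + h1 p + h2 p)) * q) = ((ε - 3 * p ^ 2 - 3 * q ^ 2) / (ε + h1 p + h2 p) - 2 * ((q - (h1 p - h2 p) / 2) / (ε + h1 p + h2 p)) * q) := by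
      field_simp
      ring
    have H1 : HasDerivAt (fun t =>
          q * ((q - (h1 t - h2 t) / 2) / (ε + h1 t + h2 t) + 1 / 2) +
            (1 - (h1 t + h2 t + 3 * t ^ 2) / (ε + h1 t + h2 t) - 3 * (h1 t - h2 t) * q / (2 * (ε + h1 t + h2 t)) -
                5 * ((q - (h1 t - h2 t) / 2) / (ε + h1 t + h2 t)) * q) *
              (((q - (h1 t - h2 t) / 2) / (ε + h1 t + h2 t)) ^ 2 - 1 / 4)) (q * ((-((deriv h1 p - deriv h2 p) / 2) * (ε + h1 p + h2 p) - (q - (h1 p - h2 p) / 2) * (deriv h1 p + deriv h2 p)) / (ε + h1 p + h2 p) / (ε + h1 p + h2 p)) + (-(6 * p) / (ε + h1 p + h2 p) - (ε - 3 * p ^ 2 - 3 * q ^ 2) * (deriv h1 p + deriv h2 p) / (ε + h1 p + h2 p) / (ε + h1 p + h2 p) - 2 * q * ((-((deriv h1 p - deriv h2 p) / 2) * (ε + h1 p + h2 p) - (q - (h1 p - h2 p) / 2) * (deriv h1 p + deriv h2 p)) / (ε + h1 p + h2 p) / (ε + h1 p + h2 p))) * (((q - (h1 p - h2 p) / 2)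 / (ε + h1 p + h2 p)) ^ 2 - 1 / 4) + ((ε - 3 * p ^ 2 - 3 * q ^ 2) / (ε + h1 p + h2 p) - 2 * ((q - (h1 p - h2 p) / 2) / (ε + h1 p + h2 p)) * q) * (2 * ((q - (h1 p - h2 p) / 2) / (ε + h1 p + h2 p)) * ((-((deriv h1 p - deriv h2 p) / 2) * (ε + h1 p + h2 p) - (q - (h1 p - h2 p) / 2) * (deriv h1 p + deriv h2 p)) / (ε + h1 p + h2 p) / (ε + h1 p + h2 p)))) p := by
      have C := (((hK q).add_const (1/2)).const_mul q).add
        (hFder.mul (((hK q).pow 2).sub_const (1/4)))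
      refine C.congr_deriv (Eq.symm ?_)
      linear_combination (norm := (push_cast [id_eq, Pi.add_apply, Pi.sub_apply, Pi.mul_apply, Pi.div_apply, Pi.pow_apply]; ring1)) (-(2 * ((q - (h1 p - h2 p) / 2) / (ε + h1 p + h2 p)) * ((-((deriv h1 p - deriv h2 p) / 2) * (ε + h1 p + h2 p) - (q - (h1 p - h2 p) / 2) * (deriv h1 p + deriv h2 p)) / (ε + h1 p + h2 p) / (ε + h1 p + h2 p)))) * hFp
    have hKt : HasDerivAt (fun t : ℝ => (t - (h1 p - h2 p) / 2) / (ε + h1 p + h2 p)) (1 / (ε + h1 p + h2 p)) q := by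
      exact ((hasDerivAt_id q).sub_const ((h1 p - h2 p) / 2)).div_const (ε + h1 p + h2 p)
    have hK1t : HasDerivAt (fun t : ℝ => (-((deriv h1 p - deriv h2 p) / 2) * (ε + h1 p + h2 p) - (t - (h1 p - h2 p) / 2) * (deriv h1 p + deriv h2 p)) / (ε + h1 p + h2 p) / (ε + h1 p + h2 p)) (-(deriv h1 p + deriv h2 p) / (ε + h1 p + h2 p) / (ε + h1 p + h2 p)) q := by
      have := (((hasDerivAt_const q (-((deriv h1 p - deriv h2 p) / 2) * (ε + h1 p + h2 p))).sub
        (((hasDerivAt_id q).sub_const ((h1 p - h2 p) / 2)).mul_const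
          (deriv h1 p + deriv h2 p))).div_const (ε + h1 p + h2 p)).div_const (ε + h1 p + h2 p)
      refine this.congr_deriv (Eq.symm ?_)
      ring
    have hGq : (3 * (ε + h1 p + h2 p) * ((q - (h1 p - h2 p) / 2) / (ε + h1 p + h2 p)) * ((-((deriv h1 p - deriv h2 p) / 2) * (ε + h1 p + h2 p) - (q - (h1 p - h2 p) / 2) * (deriv h1 p + deriv h2 p)) / (ε + h1 p + h2 p) / (ε + h1 p + h2 p)) * q + 3 * (h1 p - h2 p) / 2 * ((-((deriv h1 p - deriv h2 p) / 2) * (ε + h1 p + h2 p) - (q - (h1 p - h2 p) / 2) * (deriv h1 p + deriv h2 p)) / (ε + h1 p + h2 p) / (ε + h1 p + h2 p)) * q + 2 * p * ((q - (h1 p - h2 p) / 2) / (ε + h1 p + h2 p)) - (ε - 3 * p ^ 2) * ((-((deriv h1 p - deriv h2 p) / 2) * (ε + h1 p + h2 p) - (q - (h1 p - h2 p) / 2) * (deriv h1 p + deriv h2 p)) / (ε + h1 p + h2 p) / (ε + h1 p + h2 p))) = (-(ε - 3 * p ^ 2 - 3 * q ^ 2) * ((-((deriv h1 p - deriv h2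 p) / 2) * (ε + h1 p + h2 p) - (q - (h1 p - h2 p) / 2) * (deriv h1 p + deriv h2 p)) / (ε + h1 p + h2 p) / (ε + h1 p + h2 p)) + 2 * p * ((q - (h1 p - h2 p) / 2) / (ε + h1 p + h2 p))) := by
      field_simp
      ring
    have hGder : HasDerivAt (fun t =>
          3 * (ε + h1 p + h2 p) * ((t - (h1 p - h2 p) / 2) / (ε + h1 p + h2 p)) * ((-((deriv h1 p - deriv h2 p) / 2) * (ε + h1 p + h2 p) - (t - (h1 p - h2 p) / 2) * (deriv h1 p + deriv h2 p)) / (ε + h1 p + h2 p) / (ε + h1 p + h2 p)) * t +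
              3 * (h1 p - h2 p) / 2 * ((-((deriv h1 p - deriv h2 p) / 2) * (ε + h1 p + h2 p) - (t - (h1 p - h2 p) / 2) * (deriv h1 p + deriv h2 p)) / (ε + h1 p + h2 p) / (ε + h1 p + h2 p)) * t +
              2 * p * ((t - (h1 p - h2 p) / 2) / (ε + h1 p + h2 p)) -
            (ε - 3 * p ^ 2) * ((-((deriv h1 p - deriv h2 p) / 2) * (ε + h1 p + h2 p) - (t - (h1 p - h2 p) / 2) * (deriv h1 p + deriv h2 p)) / (ε + h1 p + h2 p) / (ε + h1 p + h2 p))) (6 * q * ((-((deriv h1 p - deriv h2 p) / 2) * (ε + h1 p + h2 p) - (q - (h1 p - h2 p) / 2) * (deriv h1 p + deriv h2 p)) / (ε + h1 p + h2 p) / (ε + h1 p + h2 p)) + (ε - 3 * p ^ 2 - 3 * q ^ 2) * (deriv h1 p + deriv h2 p) / (ε + h1 p + h2 p) / (ε + h1 p + h2 p) + 2 * p * (1 / (ε + h1 p + h2 p))) q := by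
      have C := (((((hKt.const_mul (3 * (ε + h1 p + h2 p))).mul hK1t).mul (hasDerivAt_id q)).add
        ((hK1t.const_mul (3 * (h1 p - h2 p) / 2)).mul (hasDerivAt_id q))).add
        (hKt.const_mul (2 * p))).sub (hK1t.const_mul (ε - 3 * p ^ 2))
      refine C.congr_deriv (Eq.symm ?_)
      linear_combination (norm := (push_cast [id_eq, Pi.add_apply, Pi.sub_apply, Pi.mul_apply, Pi.div_apply, Pi.pow_apply]; ring1)) (-(3 * (q * (-(deriv h1 p + deriv h2 p) / (ε + h1 p + h2 p) / (ε + h1 p + h2 p)) * (q - (h1 p - h2 p) / 2) + ((-((deriv h1 p - deriv h2 p) / 2) * (ε + h1 p + h2 p) - (q - (h1 p - h2 p) / 2) * (deriv h1 p + deriv h2 p)) / (ε + h1 p + h2 p) / (ε + h1 p + h2 p)) * (2 * q - (h1 p - h2 p) / 2)))) * hDD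
    have H2 : HasDerivAt (fun t =>
          -p * ((t - (h1 p - h2 p) / 2) / (ε + h1 p + h2 p) + 1 / 2) +
            (3 * (ε + h1 p + h2 p) * ((t - (h1 p - h2 p) / 2) / (ε + h1 p + h2 p)) * ((-((deriv h1 p - deriv h2 p) / 2) * (ε + h1 p + h2 p) - (t - (h1 p - h2 p) / 2) * (deriv h1 p + deriv h2 p)) / (ε + h1 p + h2 p) / (ε + h1 p + h2 p)) * t +
                3 * (h1 p - h2 p) / 2 * ((-((deriv h1 p - deriv h2 p) / 2) * (ε + h1 p + h2 p) - (t - (h1 p - h2 p) / 2) * (deriv h1 p + deriv h2 p)) / (ε + h1 p + h2 p) / (ε + h1 p + h2 p)) * t +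
                2 * p * ((t - (h1 p - h2 p) / 2) / (ε + h1 p + h2 p)) -
              (ε - 3 * p ^ 2) * ((-((deriv h1 p - deriv h2 p) / 2) * (ε + h1 p + h2 p) - (t - (h1 p - h2 p) / 2) * (deriv h1 p + deriv h2 p)) / (ε + h1 p + h2 p) / (ε + h1 p + h2 p))) *
              (((t - (h1 p - h2 p) / 2) / (ε + h1 p + h2 p)) ^ 2 - 1 / 4)) (-p * (1 / (ε + h1 p + h2 p)) + (6 * q * ((-((deriv h1 p - deriv h2 p) / 2) * (ε + h1 p + h2 p) - (q - (h1 p - h2 p) / 2) * (deriv h1 p + deriv h2 p)) / (ε + h1 p + h2 p) / (ε + h1 p + h2 p)) + (ε - 3 * p ^ 2 - 3 * q ^ 2) * (deriv h1 p + deriv h2 p) / (ε + h1 p + h2 p) / (ε + h1 p + h2 p) + 2 * p * (1 / (ε + h1 p + h2 p))) * (((q - (h1 p - h2 p) / 2) / (ε + h1 p + h2 p)) ^ 2 - 1 / 4) + (-(ε - 3 * p ^ 2 - 3 * q ^ 2) * ((-((deriv h1 p - deriv h2 p) / 2) * (ε + h1 p + h2 p) - (q - (h1 p - h2 p) / 2)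 * (deriv h1 p + deriv h2 p)) / (ε + h1 p + h2 p) / (ε + h1 p + h2 p)) + 2 * p * ((q - (h1 p - h2 p) / 2) / (ε + h1 p + h2 p))) * (2 * ((q - (h1 p - h2 p) / 2) / (ε + h1 p + h2 p)) * (1 / (ε + h1 p + h2 p)))) q := by
      have C := ((hKt.add_const (1/2)).const_mul (-p)).add
        (hGder.mul ((hKt.pow 2).sub_const (1/4)))
      refine C.congr_deriv (Eq.symm ?_)
      linear_combination (norm := (push_cast [id_eq, Pi.add_apply, Pi.sub_apply, Pi.mul_apply, Pi.div_apply, Pi.pow_apply]; ring1)) (-(2 * ((q - (h1 p - h2 p) / 2) / (ε + h1 p + h2 p)) * (1 / (ε + h1 p + h2 p)))) * hGq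
    rw [H1.deriv, H2.deriv]
    ring
  · intro x₁ hx
    have hD : (0:ℝ) < ε + h1 x₁ + h2 x₁ := by have := hord x₁ hx.le; linarith
    have hk2 : (ε / 2 + h1 x₁ - (h1 x₁ - h2 x₁) / 2) / (ε + h1 x₁ + h2 x₁) = 1 / 2 := by
      rw [div_eq_iff hD.ne']; ring
    simp only [Prod.mk.injEq]
    constructor <;> (rw [hk2]; ring)
  · intro x₁ hx
    have hD : (0:ℝ) < ε + h1 x₁ + h2 x₁ := by have := hord x₁ hx.le; linarith
    have hk2 : (-(ε / 2) - h2 x₁ - (h1 x₁ - h2 x₁) / 2) / (ε + h1 x₁ + h2 x₁) = -(1 / 2) := by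
      rw [div_eq_iff hD.ne']; ring
    simp only [Prod.mk_eq_zero]
    constructor <;> (rw [hk2]; ring)

end
end
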